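/- There does not exist a dynamic matching mechanism that is both strictly non-wasteful and dynamic envy-free. Concretely, in the two-period market with one home h1 and one child c1 arriving at t=1, and one home h2 and one child c2 arriving at t=2, with utilities V_{h1}(c2)=2 > V_{h1}(c1)=1, V_{h2}(c1)=2 > V_{h2}(c2)=1, U_{c1}(h2)=3/2 > U_{c1}(h1)=1, U_{c2}(h1)=3/2 > U_{c2}(h2)=1, and waiting costs w_c=2 for children and w_h=1/2 for homes, any strictly non-wasteful mechanism violates patience-freeness. -/

import Mathlib

/-- A one-to-one (partial) matching between children and homes. -/
structure Matching (C H : Type) where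
  toHome : C → Option H
  toChild : H → Option C
  consistent : ∀ c h, toHome c = some h ↔ toChild h = some c

/-- A dynamic matching market: cardinal utilities, arrival times, waiting costs. -/
structure Market (C H : Type) where
  U : C → H → ℝ
  V : H → C → ℝ
  arrC : C → ℕ
  arrH : H → ℕ
  wC : ℝ
  wH : ℝ

/-- Accept/reject action profiles of homes over time. -/
abbrev Actions (H : Type) := H → ℕ → Bool

/-- A dynamic mechanism: given the homes' action profile, a matching in each period. -/
abbrev Mechanism (C H : Type) := Actions H → ℕ → Matching C H

open scoped Classical in
/-- The counterfactual profile in which home `h` rejects every placement before `t'`,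
accepts at `t'`, and otherwise plays as in `a`; all other homes play as in `a`. -/
noncomputable def cfProfile {H : Type} (a : Actions H) (h : H) (t' : ℕ) : Actions H :=
  fun h' k =>
    if h' = h then (if k < t' then false else if k = t' then true else a h' k)
    else a h' k

namespace Market

variable {C H : Type}

/-- Time-discounted utility of home `h` for child `c` at time `t`:
`V_h^t(c) = V_h(c) - (t - arrival(h)) * w_H`. -/
noncomputable def Vt (M : Market C H) (h : H) (c : C) (t : ℕ) : ℝ :=
  M.V h c - ((t : ℝ) - (M.arrH h : ℝ)) * M.wH

/-- Child `c` is active (present in the market) at time `t`: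
she has arrived and no home has yet accepted a placement with her. -/
def activeC (M : Market C H) (Q : Mechanism C H) (a : Actions H) (c : C) (t : ℕ) : Prop :=
  M.arrC c ≤ t ∧ ¬ ∃ k < t, ∃ h, (Q a k).toHome c = some h ∧ a h k = true

/-- Home `h` is active (present in the market) at time `t`:
it has arrived and has not yet accepted a placement. -/
def activeH (M : Market C H) (Q : Mechanism C H) (a : Actions H) (h : H) (t : ℕ) : Prop :=
  M.arrH h ≤ t ∧ ¬ ∃ k < t, (Q a k).toChild h ≠ none ∧ a h k = true

/-- Admissibility: the mechanism only matches agents active in the current market. -/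
def feasible (M : Market C H) (Q : Mechanism C H) : Prop :=
  ∀ a t c h, (Q a t).toHome c = some h → M.activeC Q a c t ∧ M.activeH Q a h t

/-- Child `c` has been adopted (placement accepted) by time `t`. -/
def childAdopted (M : Market C H) (Q : Mechanism C H) (a : Actions H) (c : C) (t : ℕ) : Prop :=
  ∃ k ≤ t, ∃ h, (Q a k).toHome c = some h ∧ a h k = true

/-- Home `h` has accepted a placement by time `t`. -/
def homeAccepted (M : Market C H) (Q : Mechanism C H) (a : Actions H) (h : H) (t : ℕ) : Prop :=
  ∃ k ≤ t, (Q a k).toChild h ≠ none ∧ a h k = true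

/-- Justified envy-freeness at every period and action profile: no mutually matched
child and home both strictly prefer each other to their assigned partners. -/
def justifiedEnvyFree (M : Market C H) (Q : Mechanism C H) : Prop :=
  ∀ a t c h h' c', (Q a t).toHome c = some h' → (Q a t).toChild h = some c' →
    ¬ (M.U c h' < M.U c h ∧ M.V h c' < M.V h c)

/-- Individual rationality at every period and action profile. -/
def individuallyRational (M : Market C H) (Q : Mechanism C H) : Prop :=
  ∀ a t c h, (Q a t).toHome c = some h → 0 ≤ M.U c h ∧ 0 ≤ M.V h c

/-- Patience-freeness: any placement offered at `t` is weakly better (time-discounted)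
than the placement the home would receive at any later `t'` in the counterfactual in
which it rejects all placements before `t'` and accepts at `t'`. -/
noncomputable def patienceFree (M : Market C H) (Q : Mechanism C H) : Prop :=
  ∀ (a : Actions H) (t : ℕ) (h : H) (c : C), (Q a t).toChild h = some c →
    ∀ t' > t, ∀ c', (Q (cfProfile a h t') t').toChild h = some c' →
      M.Vt h c' t' ≤ M.Vt h c t

/-- Dynamic envy-freeness: justified envy-free, patience-free, individually rational. -/
noncomputable def dynamicEnvyFree (M : Market C H) (Q : Mechanism C H) : Prop :=
  M.justifiedEnvyFree Q ∧ M.patienceFree Q ∧ M.individuallyRational Q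

/-- Strict non-wastefulness: after every history and action profile there is never an
active unmatched child and an active unmatched home that find each other acceptable. -/
def strictlyNonWasteful (M : Market C H) (Q : Mechanism C H) : Prop :=
  ∀ a t, ¬ ∃ c h, M.activeC Q a c t ∧ M.activeH Q a h t ∧
    0 ≤ M.U c h ∧ 0 ≤ M.V h c ∧ (Q a t).toHome c = none ∧ (Q a t).toChild h = none

/-- Weak non-wastefulness: when every home accepts every offered placement,
no mutually acceptable unmatched pair ever remains. -/
def weaklyNonWasteful (M : Market C H) (Q : Mechanism C H) : Prop :=
  ∀ t, ¬ ∃ c h, M.activeC Q (fun _ _ => true) c t ∧ M.activeH Q (fun _ _ => true) h t ∧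
    0 ≤ M.U c h ∧ 0 ≤ M.V h c ∧
    (Q (fun _ _ => true) t).toHome c = none ∧ (Q (fun _ _ => true) t).toChild h = none

/-- The mechanism is a deterministic function of the history of markets (active sets)
and past matchings. -/
def historyDetermined (M : Market C H) (Q : Mechanism C H) : Prop :=
  ∀ a a' t,
    (∀ k ≤ t, ∀ c, M.activeC Q a c k ↔ M.activeC Q a' c k) →
    (∀ k ≤ t, ∀ h, M.activeH Q a h k ↔ M.activeH Q a' h k) →
    (∀ k < t, Q a k = Q a' k) →
    Q a t = Q a' t

/-- `x` is the realized (true-utility, time-discounted) payoff of home `h`: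
the time-discounted utility of an accepted placement, or `0` if `h` never accepts. -/
noncomputable def payoffIs (M : Market C H) (Q : Mechanism C H) (a : Actions H)
    (h : H) (x : ℝ) : Prop :=
  (∃ t c, (Q a t).toChild h = some c ∧ a h t = true ∧ x = M.Vt h c t) ∨
  ((∀ t c, (Q a t).toChild h = some c → a h t = false) ∧ x = 0)

end Market

/-- The two-period counterexample market: children `0 = c₁`, `1 = c₂` and homes
`0 = h₁`, `1 = h₂`, arriving at `t = 1` and `t = 2` respectively. -/
noncomputable def exMkt : Market (Fin 2) (Fin 2) where
  U := fun c h => if c = 0 then (if h = 0 then 1 else 3 / 2)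
    else (if h = 0 then 3 / 2 else 1)
  V := fun h c => if h = 0 then (if c = 0 then 1 else 2)
    else (if c = 0 then 2 else 1)
  arrC := fun c => if c = 0 then 1 else 2
  arrH := fun h => if h = 0 then 1 else 2
  wC := 2
  wH := 1 / 2

/-- Theorem 1: no mechanism is strictly non-wasteful and dynamic envy-free.
In the concrete two-period market any strictly non-wasteful mechanism that is
justified envy-free and individually rational must violate patience-freeness. -/
theorem no_strictlyNonWasteful_dynamicEnvyFree (Q : Mechanism (Fin 2) (Fin 2))
    (hfeas : exMkt.feasible Q) (hsnw : exMkt.strictlyNonWasteful Q)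
    (hjef : exMkt.justifiedEnvyFree Q) (hir : exMkt.individuallyRational Q) :
    ¬ exMkt.patienceFree Q := by
  intro hpf
  have hfin : ∀ x : Fin 2, x = 0 ∨ x = 1 := by decide
  -- Nothing can be matched at time 0.
  have hA : ∀ (b : Actions (Fin 2)) (c : Fin 2), (Q b 0).toHome c = none := by
    intro b c
    by_contra hne
    obtain ⟨h, hh⟩ := Option.ne_none_iff_exists'.mp hne
    have := (hfeas b 0 c h hh).1.1
    rcases hfin c with rfl | rfl <;> simp [exMkt] at this
  have hA' : ∀ (b : Actions (Fin 2)) (h : Fin 2), (Q b 0).toChild h = none := by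
    intro b h
    by_contra hne
    obtain ⟨c, hc⟩ := Option.ne_none_iff_exists'.mp hne
    have := ((Q b 0).consistent c h).mpr hc
    rw [hA b c] at this
    exact nomatch this
  -- At time 1, for any profile, c₁ is matched with h₁.
  have hB : ∀ b : Actions (Fin 2), (Q b 1).toHome 0 = some 0 := by
    intro b
    have hc1 : exMkt.activeC Q b 0 1 := by
      refine ⟨by simp [exMkt], ?_⟩
      rintro ⟨k, hk, h, hQ, -⟩
      interval_cases k
      rw [hA b 0] at hQ
      exact nomatch hQ
    have hh1 : exMkt.activeH Q b 0 1 := by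
      refine ⟨by simp [exMkt], ?_⟩
      rintro ⟨k, hk, hQ, -⟩
      interval_cases k
      exact hQ (hA' b 0)
    by_cases hm : (Q b 1).toHome 0 = none
    · by_cases hm' : (Q b 1).toChild 0 = none
      · exact absurd ⟨0, 0, hc1, hh1, by norm_num [exMkt], by norm_num [exMkt], hm, hm'⟩
          (hsnw b 1)
      · obtain ⟨c, hc⟩ := Option.ne_none_iff_exists'.mp hm'
        have hth := ((Q b 1).consistent c 0).mpr hc
        have hact := (hfeas b 1 c 0 hth).1.1
        rcases hfin c with rfl | rfl
        · rw [hth] at hm; exact nomatch hm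
        · simp [exMkt] at hact
    · obtain ⟨h, hh⟩ := Option.ne_none_iff_exists'.mp hm
      have hact := (hfeas b 1 0 h hh).2.1
      rcases hfin h with rfl | rfl
      · exact hh
      · simp [exMkt] at hact
  -- The counterfactual profile where h₁ rejects at time 1.
  set a : Actions (Fin 2) := fun _ _ => true with ha
  set a' : Actions (Fin 2) := cfProfile a 0 2 with ha'
  have ha'01 : a' 0 1 = false := by simp [ha', cfProfile]
  -- All four agents are active at time 2 under a'.
  have hC1 : exMkt.activeC Q a' 0 2 := by
    refine ⟨by simp [exMkt], ?_⟩
    rintro ⟨k, hk, h, hQ, hacc⟩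
    interval_cases k
    · rw [hA a' 0] at hQ; exact nomatch hQ
    · rw [hB a'] at hQ
      have : h = 0 := (Option.some_inj.mp hQ).symm
      rw [this, ha'01] at hacc
      exact Bool.noConfusion hacc
  have hC2 : exMkt.activeC Q a' 1 2 := by
    refine ⟨by simp [exMkt], ?_⟩
    rintro ⟨k, hk, h, hQ, -⟩
    interval_cases k
    · rw [hA a' 1] at hQ; exact nomatch hQ
    · have := (hfeas a' 1 1 h hQ).1.1
      simp [exMkt] at this
  have hH1 : exMkt.activeH Q a' 0 2 := by
    refine ⟨by simp [exMkt], ?_⟩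
    rintro ⟨k, hk, hQ, hacc⟩
    interval_cases k
    · exact hQ (hA' a' 0)
    · rw [ha'01] at hacc; exact Bool.noConfusion hacc
  have hH2 : exMkt.activeH Q a' 1 2 := by
    refine ⟨by simp [exMkt], ?_⟩
    rintro ⟨k, hk, hQ, -⟩
    interval_cases k
    · exact hQ (hA' a' 1)
    · obtain ⟨c, hc⟩ := Option.ne_none_iff_exists'.mp hQ
      have hth := ((Q a' 1).consistent c 1).mpr hc
      have := (hfeas a' 1 c 1 hth).2.1
      simp [exMkt] at this
  -- At time 2 under a', h₁ is matched to some child.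
  have hstep : ∃ c, (Q a' 2).toChild 0 = some c := by
    by_contra hnone
    push_neg at hnone
    have hch0 : (Q a' 2).toChild 0 = none := by
      cases hcase : (Q a' 2).toChild 0 with
      | none => rfl
      | some c => exact absurd hcase (hnone c)
    -- c₁ must be matched (else SNW with h₁ fails), necessarily to h₂
    have hc1m : (Q a' 2).toHome 0 = some 1 := by
      by_cases hm : (Q a' 2).toHome 0 = none
      · exact absurd ⟨0, 0, hC1, hH1, by norm_num [exMkt], by norm_num [exMkt], hm, hch0⟩
          (hsnw a' 2)
      · obtain ⟨h, hh⟩ := Option.ne_none_iff_exists'.mp hm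
        rcases hfin h with rfl | rfl
        · have := ((Q a' 2).consistent 0 0).mp hh
          rw [hch0] at this; exact nomatch this
        · exact hh
    have hch1 : (Q a' 2).toChild 1 = some 0 := ((Q a' 2).consistent 0 1).mp hc1m
    -- c₂ must be matched (else SNW with h₁ fails), but no home is left
    by_cases hm2 : (Q a' 2).toHome 1 = none
    · exact (hsnw a' 2) ⟨1, 0, hC2, hH1, by norm_num [exMkt], by norm_num [exMkt], hm2, hch0⟩
    · obtain ⟨h, hh⟩ := Option.ne_none_iff_exists'.mp hm2
      have := ((Q a' 2).consistent 1 h).mp hh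
      rcases hfin h with rfl | rfl
      · rw [hch0] at this; exact nomatch this
      · rw [hch1] at this; simp at this
  obtain ⟨c, hc⟩ := hstep
  have hcc : c = 1 := by
    rcases hfin c with rfl | rfl
    · -- c₁ matched to h₁ at t=2: then c₂ matched to h₂, creating justified envy
      have hc10 : (Q a' 2).toHome 0 = some 0 := ((Q a' 2).consistent 0 0).mpr hc
      have hc2m : (Q a' 2).toHome 1 = some 1 := by
        by_cases hm2 : (Q a' 2).toHome 1 = none
        · by_cases hm2' : (Q a' 2).toChild 1 = none
          · exact absurd ⟨1, 1, hC2, hH2, by norm_num [exMkt], by norm_num [exMkt], hm2, hm2'⟩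
              (hsnw a' 2)
          · obtain ⟨c', hc'⟩ := Option.ne_none_iff_exists'.mp hm2'
            have hth := ((Q a' 2).consistent c' 1).mpr hc'
            rcases hfin c' with rfl | rfl
            · rw [hc10] at hth; simp at hth
            · rw [hm2] at hth; exact nomatch hth
        · obtain ⟨h, hh⟩ := Option.ne_none_iff_exists'.mp hm2
          rcases hfin h with rfl | rfl
          · have := ((Q a' 2).consistent 1 0).mp hh
            rw [hc] at this; simp at this
          · exact hh
      have hch2 : (Q a' 2).toChild 1 = some 1 := ((Q a' 2).consistent 1 1).mp hc2m
      exact absurd (by norm_num [exMkt] : exMkt.U 0 0 < exMkt.U 0 1 ∧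
        exMkt.V 1 1 < exMkt.V 1 0) (hjef a' 2 0 1 0 1 hc10 hch2)
    · rfl
  subst hcc
  -- Patience-freeness is violated: Vt h₁ c₂ 2 = 3/2 > 1 = Vt h₁ c₁ 1.
  have hch : (Q a 1).toChild 0 = some 0 := ((Q a 1).consistent 0 0).mp (hB a)
  have := hpf a 1 0 0 hch 2 (by norm_num) 1 hc
  norm_num [Market.Vt, exMkt] at this
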